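/- For a real-valued polynomial $p$ in $z$ and $\bar z$, the twist $T(w,z)$ satisfies $\frac{\partial T}{\partial z}(w,z) = -i\frac{\partial p}{\partial z}(z) - i\sum_{j \ge 1}\frac{1}{j!}\frac{\partial^{j+1}p}{\partial z \partial \bar z^j}(z)\,\overline{(w-z)}^j$, where the derivative is the Wirtinger derivative in $z$ with $w$ held fixed. -/

import Mathlib

open Finset Complex

/-- The coefficient `A_{jk}(z) = (1/(j!k!)) ∂^{j+k}p/∂z^j∂z̄^k (z)` of the
polynomial `p(z) = ∑_{m,n ≤ d} a m n · z^m · z̄^n`. -/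
noncomputable def Acoef (d : ℕ) (a : ℕ → ℕ → ℂ) (j k : ℕ) (z : ℂ) : ℂ :=
  ∑ m ∈ Finset.range (d + 1), ∑ n ∈ Finset.range (d + 1),
    (m.choose j : ℂ) * (n.choose k : ℂ) * a m n * z ^ (m - j) * (starRingEnd ℂ z) ^ (n - k)

/-- The twist `T(w,z) = -2 Im (∑_{j≥1} (1/j!) ∂^j p/∂z^j (z) (w-z)^j)`. -/
noncomputable def Twist (d : ℕ) (a : ℕ → ℕ → ℂ) (w z : ℂ) : ℝ :=
  -2 * (∑ j ∈ Finset.Icc 1 d, Acoef d a j 0 z * (w - z) ^ j).im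

/-- `Λ(z,δ) = ∑_{j,k ≥ 1} |A_{jk}(z)| δ^{j+k}`. -/
noncomputable def Lam (d : ℕ) (a : ℕ → ℕ → ℂ) (z : ℂ) (δ : ℝ) : ℝ :=
  ∑ j ∈ Finset.Icc 1 d, ∑ k ∈ Finset.Icc 1 d,
    ‖Acoef d a j k z‖ * δ ^ (j + k)

/-- `μ(z,δ) = inf_{j,k ≥ 1, A_{jk}(z) ≠ 0} (|δ|/|A_{jk}(z)|)^{1/(j+k)}`. -/
noncomputable def muF (d : ℕ) (a : ℕ → ℕ → ℂ) (z : ℂ) (δ : ℝ) : ℝ :=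
  sInf {x : ℝ | ∃ j k : ℕ, 1 ≤ j ∧ 1 ≤ k ∧ Acoef d a j k z ≠ 0 ∧
    x = (|δ| / ‖Acoef d a j k z‖) ^ (1 / ((j : ℝ) + (k : ℝ)))}

/-- The Wirtinger derivative `∂f/∂z = (1/2)(∂f/∂x - i ∂f/∂y)`. -/
noncomputable def wDz (f : ℂ → ℂ) (z : ℂ) : ℂ :=
  (fderiv ℝ f z 1 - Complex.I * fderiv ℝ f z Complex.I) / 2

/-- The Wirtinger derivative `∂f/∂z̄ = (1/2)(∂f/∂x + i ∂f/∂y)`. -/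
noncomputable def wDzbar (f : ℂ → ℂ) (z : ℂ) : ℂ :=
  (fderiv ℝ f z 1 + Complex.I * fderiv ℝ f z Complex.I) / 2

/-- The nonisotropic pseudodistance `d_{NI}(z,w,t) = |z-w| + μ(z, t+T(w,z))`. -/
noncomputable def dNI (d : ℕ) (a : ℕ → ℕ → ℂ) (z w : ℂ) (t : ℝ) : ℝ :=
  ‖z - w‖ + muF d a z (t + Twist d a w z)

/- ### helpers -/

noncomputable def mder (α β : ℂ) : ℂ →L[ℝ] ℂ :=
  α • (ContinuousLinearMap.id ℝ ℂ) + β • (Complex.conjCLE.toContinuousLinearMap)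

lemma mder_apply (α β v : ℂ) : mder α β v = α * v + β * (starRingEnd ℂ v) := by
  simp [mder, smul_eq_mul]

lemma mder_smul (c α β : ℂ) : c • mder α β = mder (c*α) (c*β) := by
  ext1 v; simp [mder_apply, smul_eq_mul]; ring

lemma mder_add (α β γ δ : ℂ) : mder α β + mder γ δ = mder (α+γ) (β+δ) := by
  ext1 v; simp [mder_apply]; ring

lemma mder_sub (α β γ δ : ℂ) : mder α β - mder γ δ = mder (α-γ) (β-δ) := by
  ext1 v; simp [mder_apply]; ring

lemma mder_sum {ι : Type*} (s : Finset ι) (f g : ι → ℂ) :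
    ∑ i ∈ s, mder (f i) (g i) = mder (∑ i ∈ s, f i) (∑ i ∈ s, g i) := by
  ext1 v
  simp [mder_apply, ContinuousLinearMap.sum_apply, Finset.sum_add_distrib, Finset.sum_mul]

lemma mder_conj_comp (α β : ℂ) :
    (Complex.conjCLE.toContinuousLinearMap).comp (mder α β)
      = mder (starRingEnd ℂ β) (starRingEnd ℂ α) := by
  ext1 v
  simp [mder_apply, map_add, map_mul]
  ring

lemma wDz_mder {f : ℂ → ℂ} {z α β : ℂ} (h : HasFDerivAt f (mder α β) z) :
    wDz f z = α := by
  rw [wDz, h.fderiv]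
  simp only [mder_apply, map_one, mul_one, Complex.conj_I]
  field_simp
  ring_nf
  rw [Complex.I_sq]
  ring

lemma hasFDerivAt_pow'' (p : ℕ) (z : ℂ) :
    HasFDerivAt (fun ζ : ℂ => ζ ^ p) (mder ((p : ℂ) * z ^ (p - 1)) 0) z := by
  have h := ((hasDerivAt_pow p z).hasFDerivAt).restrictScalars ℝ
  refine h.congr_fderiv (Eq.symm ?_)
  ext1 v
  simp [mder_apply, smul_eq_mul]; ring

lemma hasFDerivAt_conj_pow (q : ℕ) (z : ℂ) :
    HasFDerivAt (fun ζ : ℂ => (starRingEnd ℂ ζ) ^ q)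
      (mder 0 ((q : ℂ) * (starRingEnd ℂ z) ^ (q - 1))) z := by
  have hc : HasFDerivAt (fun ζ : ℂ => starRingEnd ℂ ζ)
      (Complex.conjCLE.toContinuousLinearMap) z := Complex.conjCLE.toContinuousLinearMap.hasFDerivAt
  have h := (hasFDerivAt_pow'' q (starRingEnd ℂ z)).comp z hc
  refine h.congr_fderiv (Eq.symm ?_)
  ext1 v
  simp [mder_apply, smul_eq_mul]

lemma hasFDerivAt_sub_pow (r : ℕ) (w z : ℂ) :
    HasFDerivAt (fun ζ : ℂ => (w - ζ) ^ r)
      (mder (-((r : ℂ) * (w - z) ^ (r - 1))) 0) z := by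
  have hc : HasFDerivAt (fun ζ : ℂ => w - ζ) (-(ContinuousLinearMap.id ℝ ℂ)) z :=
    (hasFDerivAt_id z).const_sub w
  have h := (hasFDerivAt_pow'' r (w - z)).comp z hc
  refine h.congr_fderiv (Eq.symm ?_)
  ext1 v
  simp [mder_apply, smul_eq_mul]

lemma hasFDerivAt_term (c : ℂ) (p q r : ℕ) (w z : ℂ) :
    HasFDerivAt (fun ζ : ℂ => c * (ζ ^ p * (starRingEnd ℂ ζ) ^ q * (w - ζ) ^ r))
      (mder (c * ((p : ℂ) * z ^ (p-1) * (starRingEnd ℂ z) ^ q * (w - z) ^ r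
              - (r : ℂ) * z ^ p * (starRingEnd ℂ z) ^ q * (w - z) ^ (r-1)))
            (c * ((q : ℂ) * z ^ p * (starRingEnd ℂ z) ^ (q-1) * (w - z) ^ r))) z := by
  have h := ((((hasFDerivAt_pow'' p z).mul (hasFDerivAt_conj_pow q z)).mul
      (hasFDerivAt_sub_pow r w z)).const_mul c)
  refine h.congr_fderiv (Eq.symm ?_)
  simp only [mder_smul, mder_add, Pi.mul_apply]
  congr 1 <;> ring

lemma sum_Icc_telescope (g : ℕ → ℂ) (d : ℕ) :
    ∑ j ∈ Finset.Icc 1 d, (g (j+1) - g j) = g (d+1) - g 1 := by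
  induction d with
  | zero => simp
  | succ n ih => rw [Finset.sum_Icc_succ_top (by omega), ih]; ring

lemma tele' (d m : ℕ) (hm : m < d + 1) (z w : ℂ) :
    ∑ j ∈ Finset.Icc 1 d,
      ((m.choose j : ℂ) * ((m - j : ℕ) : ℂ) * z ^ (m - j - 1) * (w - z) ^ j
        - (m.choose j : ℂ) * (j : ℂ) * z ^ (m - j) * (w - z) ^ (j - 1))
      = -((m : ℂ) * z ^ (m - 1)) := by
  set g : ℕ → ℂ := fun j => (m.choose j : ℂ) * (j : ℂ) * z ^ (m - j) * (w - z) ^ (j - 1) with hg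
  have key : ∀ j, (m.choose j : ℂ) * ((m - j : ℕ) : ℂ) * z ^ (m - j - 1) * (w - z) ^ j
      = g (j + 1) := by
    intro j
    have h2 : ((m.choose (j+1) : ℕ) : ℂ) * ((j+1 : ℕ) : ℂ)
        = (m.choose j : ℂ) * ((m - j : ℕ) : ℂ) := by
      rw [← Nat.cast_mul, ← Nat.cast_mul, Nat.choose_succ_right_eq m j]
    have hgj : g (j+1) = ((m.choose (j+1) : ℕ) : ℂ) * ((j+1 : ℕ) : ℂ)
        * z ^ (m - j - 1) * (w - z) ^ j := by
      simp only [hg, Nat.add_sub_cancel, ← Nat.sub_sub]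
    rw [hgj, h2]
  have hgd : g (d + 1) = 0 := by
    simp [hg, Nat.choose_eq_zero_of_lt hm]
  have hg1 : g 1 = (m : ℂ) * z ^ (m - 1) := by
    simp [hg, Nat.choose_one_right]
  calc ∑ j ∈ Finset.Icc 1 d, _ = ∑ j ∈ Finset.Icc 1 d, (g (j+1) - g j) := by
        apply Finset.sum_congr rfl
        intro j _
        rw [key j]
      _ = g (d+1) - g 1 := sum_Icc_telescope g d
      _ = -((m : ℂ) * z ^ (m - 1)) := by rw [hgd, hg1]; ring

/- ### the triple-sum function and its derivative -/

noncomputable def Pfun (d : ℕ) (a : ℕ → ℕ → ℂ) (w ζ : ℂ) : ℂ :=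
  ∑ j ∈ Finset.Icc 1 d, ∑ m ∈ Finset.range (d + 1), ∑ n ∈ Finset.range (d + 1),
    ((m.choose j : ℂ) * a m n) * (ζ ^ (m - j) * (starRingEnd ℂ ζ) ^ n * (w - ζ) ^ j)

noncomputable def Aval (d : ℕ) (a : ℕ → ℕ → ℂ) (w z : ℂ) : ℂ :=
  ∑ j ∈ Finset.Icc 1 d, ∑ m ∈ Finset.range (d + 1), ∑ n ∈ Finset.range (d + 1),
    ((m.choose j : ℂ) * a m n) *
      (((m - j : ℕ) : ℂ) * z ^ (m - j - 1) * (starRingEnd ℂ z) ^ n * (w - z) ^ j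
        - (j : ℂ) * z ^ (m - j) * (starRingEnd ℂ z) ^ n * (w - z) ^ (j - 1))

noncomputable def Bval (d : ℕ) (a : ℕ → ℕ → ℂ) (w z : ℂ) : ℂ :=
  ∑ j ∈ Finset.Icc 1 d, ∑ m ∈ Finset.range (d + 1), ∑ n ∈ Finset.range (d + 1),
    ((m.choose j : ℂ) * a m n) *
      ((n : ℂ) * z ^ (m - j) * (starRingEnd ℂ z) ^ (n - 1) * (w - z) ^ j)

lemma hasFDerivAt_Pfun (d : ℕ) (a : ℕ → ℕ → ℂ) (w z : ℂ) :
    HasFDerivAt (Pfun d a w) (mder (Aval d a w z) (Bval d a w z)) z := by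
  have h : HasFDerivAt (Pfun d a w)
      (∑ j ∈ Finset.Icc 1 d, ∑ m ∈ Finset.range (d + 1), ∑ n ∈ Finset.range (d + 1),
        mder (((m.choose j : ℂ) * a m n) *
          (((m - j : ℕ) : ℂ) * z ^ (m - j - 1) * (starRingEnd ℂ z) ^ n * (w - z) ^ j
            - (j : ℂ) * z ^ (m - j) * (starRingEnd ℂ z) ^ n * (w - z) ^ (j - 1)))
          (((m.choose j : ℂ) * a m n) *
            ((n : ℂ) * z ^ (m - j) * (starRingEnd ℂ z) ^ (n - 1) * (w - z) ^ j))) z := by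
    apply HasFDerivAt.fun_sum
    intro j _
    apply HasFDerivAt.fun_sum
    intro m _
    apply HasFDerivAt.fun_sum
    intro n _
    exact hasFDerivAt_term ((m.choose j : ℂ) * a m n) (m - j) n j w z
  simpa only [mder_sum, Aval, Bval] using h

lemma Twist_eq_Pfun (d : ℕ) (a : ℕ → ℕ → ℂ) (w ζ : ℂ) :
    ((Twist d a w ζ : ℝ) : ℂ)
      = Complex.I * (Pfun d a w ζ - starRingEnd ℂ (Pfun d a w ζ)) := by
  have hsum : (∑ j ∈ Finset.Icc 1 d, Acoef d a j 0 ζ * (w - ζ) ^ j) = Pfun d a w ζ := by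
    unfold Pfun Acoef
    apply Finset.sum_congr rfl
    intro j _
    rw [Finset.sum_mul]
    apply Finset.sum_congr rfl
    intro m _
    rw [Finset.sum_mul]
    apply Finset.sum_congr rfl
    intro n _
    simp [Nat.choose_zero_right]
    ring
  rw [Twist, hsum, Complex.sub_conj]
  push_cast
  ring_nf
  rw [Complex.I_sq]
  ring

lemma Aval_eq (d : ℕ) (a : ℕ → ℕ → ℂ) (w z : ℂ) :
    Aval d a w z = -Acoef d a 1 0 z := by
  unfold Aval Acoef
  rw [Finset.sum_comm]
  rw [← Finset.sum_neg_distrib]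
  apply Finset.sum_congr rfl
  intro m hm
  rw [Finset.sum_comm, ← Finset.sum_neg_distrib]
  apply Finset.sum_congr rfl
  intro n _
  have hmlt : m < d + 1 := Finset.mem_range.mp hm
  calc ∑ j ∈ Finset.Icc 1 d, ((m.choose j : ℂ) * a m n) *
        (((m - j : ℕ) : ℂ) * z ^ (m - j - 1) * (starRingEnd ℂ z) ^ n * (w - z) ^ j
          - (j : ℂ) * z ^ (m - j) * (starRingEnd ℂ z) ^ n * (w - z) ^ (j - 1))
      = a m n * (starRingEnd ℂ z) ^ n *
          ∑ j ∈ Finset.Icc 1 d,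
            ((m.choose j : ℂ) * ((m - j : ℕ) : ℂ) * z ^ (m - j - 1) * (w - z) ^ j
              - (m.choose j : ℂ) * (j : ℂ) * z ^ (m - j) * (w - z) ^ (j - 1)) := by
        rw [Finset.mul_sum]
        apply Finset.sum_congr rfl
        intro j _
        ring
    _ = a m n * (starRingEnd ℂ z) ^ n * -((m : ℂ) * z ^ (m - 1)) := by
        rw [tele' d m hmlt z w]
    _ = -((m.choose 1 : ℂ) * (n.choose 0 : ℂ) * a m n * z ^ (m - 1)
          * (starRingEnd ℂ z) ^ (n - 0)) := by
        simp [Nat.choose_one_right, Nat.choose_zero_right]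
        ring

lemma Bval_eq (d : ℕ) (a : ℕ → ℕ → ℂ)
    (hreal : ∀ m n, (starRingEnd ℂ) (a m n) = a n m) (w z : ℂ) :
    starRingEnd ℂ (Bval d a w z)
      = ∑ j ∈ Finset.Icc 1 d, Acoef d a 1 j z * (starRingEnd ℂ (w - z)) ^ j := by
  unfold Bval Acoef
  simp only [map_sum]
  apply Finset.sum_congr rfl
  intro j _
  rw [Finset.sum_comm, Finset.sum_mul]
  apply Finset.sum_congr rfl
  intro n _
  rw [Finset.sum_mul]
  apply Finset.sum_congr rfl
  intro m _
  simp only [map_mul, map_pow, map_natCast, Complex.conj_conj, hreal]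
  simp [Nat.choose_one_right]
  ring

/-- For a real-valued polynomial `p` in `z` and `z̄`, the Wirtinger `z`-derivative of
the twist (with `w` fixed) satisfies
`∂T/∂z (w,z) = -i ∂p/∂z(z) - i ∑_{j≥1} (1/j!) ∂^{j+1}p/∂z∂z̄^j(z) conj(w-z)^j`. -/
theorem twist_deriv_z (d : ℕ) (a : ℕ → ℕ → ℂ)
    (hreal : ∀ m n, (starRingEnd ℂ) (a m n) = a n m) (z w : ℂ) :
    wDz (fun ζ => ((Twist d a w ζ : ℝ) : ℂ)) z
      = -Complex.I * Acoef d a 1 0 z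
        - Complex.I * ∑ j ∈ Finset.Icc 1 d,
            Acoef d a 1 j z * (starRingEnd ℂ (w - z)) ^ j := by
  have hP := hasFDerivAt_Pfun d a w z
  have hconj : HasFDerivAt (fun ζ => starRingEnd ℂ (Pfun d a w ζ))
      (mder (starRingEnd ℂ (Bval d a w z)) (starRingEnd ℂ (Aval d a w z))) z := by
    have h := (Complex.conjCLE.toContinuousLinearMap.hasFDerivAt (x := Pfun d a w z)).comp z hP
    rw [mder_conj_comp] at h
    exact h
  have hfull : HasFDerivAt (fun ζ => Complex.I * (Pfun d a w ζ - starRingEnd ℂ (Pfun d a w ζ)))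
      (mder (Complex.I * (Aval d a w z - starRingEnd ℂ (Bval d a w z)))
            (Complex.I * (Bval d a w z - starRingEnd ℂ (Aval d a w z)))) z := by
    have h := (hP.sub hconj).const_mul Complex.I
    rwa [mder_sub, mder_smul] at h
  have hfun : (fun ζ => ((Twist d a w ζ : ℝ) : ℂ))
      = fun ζ => Complex.I * (Pfun d a w ζ - starRingEnd ℂ (Pfun d a w ζ)) :=
    funext fun ζ => Twist_eq_Pfun d a w ζ
  rw [hfun, wDz_mder hfull, Aval_eq, Bval_eq d a hreal]
  ring
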